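/- Let Q : ℝ → Set ℝ and S : ℝ → Set ℝ be as defined below. Then S is not metrically regular around (0, 0): there exist no η > 0 and ε > 0 such that infDist(x, S⁻¹(y)) ≤ η·infDist(y, S(x)) for all x, y ∈ [−ε, ε], where S⁻¹(y) = {x | y ∈ S(x)}. -/

import Mathlib

open Set

/-- The set-valued mapping `Q` from Example 3.3 of the paper. -/
def Q (y : ℝ) : Set ℝ :=
  {v : ℝ |
    (y = 0 ∧ v = 0) ∨
    (∃ k : ℕ, y = (2 : ℝ) ^ (-(k : ℝ) / 3) ∧
      v ∈ Icc ((2 : ℝ) ^ (-((k : ℝ) + 1))) ((2 : ℝ) ^ (-(k : ℝ)))) ∨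
    (∃ k : ℕ, y ∈ Ioo ((2 : ℝ) ^ (-((k : ℝ) + 1) / 3)) ((2 : ℝ) ^ (-(k : ℝ) / 3)) ∧
      v = (2 : ℝ) ^ (-((k : ℝ) + 1))) ∨
    (∃ k : ℕ, y = -(2 : ℝ) ^ (-(k : ℝ) / 3) ∧
      v ∈ Icc (-(2 : ℝ) ^ (-(k : ℝ))) (-(2 : ℝ) ^ (-((k : ℝ) + 1)))) ∨
    (∃ k : ℕ, y ∈ Ioo (-(2 : ℝ) ^ (-(k : ℝ) / 3)) (-(2 : ℝ) ^ (-((k : ℝ) + 1) / 3)) ∧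
      v = -(2 : ℝ) ^ (-((k : ℝ) + 1)))}

/-- The solution map `S(x) = {y | 0 ∈ x + Q(y)}` of the generalized equation. -/
def S (x : ℝ) : Set ℝ := {y : ℝ | -x ∈ Q y}

private lemma rpow2_lt {s u : ℝ} (h : s < u) : (2:ℝ) ^ s < (2:ℝ) ^ u :=
  (Real.rpow_lt_rpow_left_iff one_lt_two).mpr h

private lemma rpow2_lt_iff {s u : ℝ} : (2:ℝ) ^ s < (2:ℝ) ^ u ↔ s < u :=
  Real.rpow_lt_rpow_left_iff one_lt_two

set_option maxHeartbeats 1000000 in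
/-- the solution map `S` is not metrically regular around `(0, 0)`. -/
theorem S_not_metrically_regular :
    ¬ ∃ η > (0 : ℝ), ∃ ε > (0 : ℝ), ∀ x ∈ Icc (-ε) ε, ∀ y ∈ Icc (-ε) ε,
      Metric.infDist x {u : ℝ | y ∈ S u} ≤ η * Metric.infDist y (S x) := by
  rintro ⟨η, hη, ε, hε, H⟩
  set c : ℝ := (2:ℝ) ^ (-(1:ℝ)/3) with hc
  have hc0 : 0 < c := Real.rpow_pos_of_pos two_pos _
  have hc1 : c < 1 := Real.rpow_lt_one_of_one_lt_of_neg one_lt_two (by norm_num)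
  obtain ⟨m, hm⟩ := exists_pow_lt_of_lt_one hε hc1
  have hpow : ∀ j : ℕ, c ^ j = (2:ℝ) ^ (-(j:ℝ)/3) := by
    intro j
    rw [hc, ← Real.rpow_natCast ((2:ℝ) ^ (-(1:ℝ)/3)) j, ← Real.rpow_mul (by norm_num)]
    ring_nf
  set a : ℝ := (2:ℝ) ^ (-((m:ℝ)+1)/3) with ha
  set b : ℝ := (2:ℝ) ^ (-(m:ℝ)/3) with hb
  have hm0 : (0:ℝ) ≤ (m:ℝ) := Nat.cast_nonneg m
  have haε : a < ε := by
    have h1 : a = c ^ (m+1) := by rw [hpow (m+1), ha]; push_cast; ring_nf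
    calc a = c ^ (m+1) := h1
      _ ≤ c ^ m := pow_le_pow_of_le_one hc0.le hc1.le (Nat.le_succ m)
      _ < ε := hm
  have hab : a < b := rpow2_lt (by linarith)
  have ha0 : 0 < a := Real.rpow_pos_of_pos two_pos _
  set p : ℝ := (2:ℝ) ^ (-((m:ℝ)+2)) with hp
  set q : ℝ := (2:ℝ) ^ (-((m:ℝ)+1)) with hq
  have hp0 : 0 < p := Real.rpow_pos_of_pos two_pos _
  have hq2p : q = 2 * p := by
    rw [hq, hp, show -((m:ℝ)+1) = -((m:ℝ)+2) + 1 by ring, Real.rpow_add two_pos,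
      Real.rpow_one]
    ring
  have hpa : p < a := rpow2_lt (by linarith)
  set t : ℝ := min (min ((b-a)/2) ((ε-a)/2)) (p/(2*η)) with ht
  have ht0 : 0 < t := by
    apply lt_min (lt_min (by linarith) (by linarith))
    positivity
  have htab : t < b - a := lt_of_le_of_lt (le_trans (min_le_left _ _) (min_le_left _ _)) (by linarith)
  have htε : t < ε - a := lt_of_le_of_lt (le_trans (min_le_left _ _) (min_le_right _ _)) (by linarith)
  have htp : t ≤ p/(2*η) := min_le_right _ _
  set x : ℝ := -p with hx
  set y : ℝ := a + t with hy
  have hxmem : x ∈ Icc (-ε) ε := by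
    constructor <;> rw [hx] <;> nlinarith
  have hymem : y ∈ Icc (-ε) ε := by
    constructor <;> rw [hy] <;> nlinarith
  -- a ∈ S x
  have haS : a ∈ S x := by
    refine Or.inr (Or.inl ⟨m+1, ?_, ?_, ?_⟩)
    · rw [ha]; congr 1; push_cast; ring
    · rw [hx, neg_neg, hp]
      exact le_of_eq (by congr 1; push_cast; ring)
    · rw [hx, neg_neg, hp]
      refine le_of_lt (rpow2_lt ?_)
      push_cast; linarith
  -- {u | y ∈ S u} = {-q}
  have hya : a < y := by rw [hy]; linarith
  have hyb : y < b := by rw [hy]; linarith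
  have hy0 : 0 < y := lt_trans ha0 hya
  have hTset : {u : ℝ | y ∈ S u} = {-q} := by
    apply Subset.antisymm
    · rintro u hu
      simp only [S, Q, mem_setOf_eq] at hu
      rcases hu with ⟨h0, _⟩ | ⟨j, hj, _⟩ | ⟨j, ⟨hj1, hj2⟩, hv⟩ | ⟨j, hj, _⟩ | ⟨j, ⟨_, hj2⟩, _⟩
      · exact absurd h0 (ne_of_gt hy0)
      · have h1 : (j:ℝ) < (m:ℝ) + 1 := by
          have := rpow2_lt_iff.mp (hj ▸ hya); linarith
        have h2 : (m:ℝ) < (j:ℝ) := by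
          have := rpow2_lt_iff.mp (hj ▸ hyb); linarith
        have h1' : j < m + 1 := by exact_mod_cast h1
        have h2' : m < j := by exact_mod_cast h2
        omega
      · have h1 : (j:ℝ) < (m:ℝ) + 1 := by
          have := rpow2_lt_iff.mp (lt_trans hya hj2); linarith
        have h2 : (m:ℝ) < (j:ℝ) + 1 := by
          have := rpow2_lt_iff.mp (lt_trans hj1 hyb); linarith
        have h1' : j < m + 1 := by exact_mod_cast h1
        have h2' : m < j + 1 := by exact_mod_cast h2
        have hjm : j = m := by omega
        subst hjm
        have : -u = q := by rw [hv, hq]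
        simp only [mem_singleton_iff]; linarith
      · have : (0:ℝ) < (2:ℝ) ^ (-(j:ℝ)/3) := Real.rpow_pos_of_pos two_pos _
        rw [hj] at hy0; linarith
      · have : (0:ℝ) < (2:ℝ) ^ (-((j:ℝ)+1)/3) := Real.rpow_pos_of_pos two_pos _
        linarith
    · intro u hu
      simp only [mem_singleton_iff] at hu
      subst hu
      show y ∈ S (-q)
      refine Or.inr (Or.inr (Or.inl ⟨m, ⟨?_, ?_⟩, ?_⟩))
      · exact hya
      · exact hyb
      · rw [neg_neg]
  have hLHS : Metric.infDist x {u : ℝ | y ∈ S u} = p := by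
    rw [hTset, Metric.infDist_singleton, Real.dist_eq, hx]
    rw [show -p - -q = q - p by ring, abs_of_pos (by linarith)]
    linarith
  have hRHS : Metric.infDist y (S x) ≤ t := by
    calc Metric.infDist y (S x) ≤ dist y a := Metric.infDist_le_dist_of_mem haS
      _ = t := by rw [Real.dist_eq, hy, show a + t - a = t by ring, abs_of_pos ht0]
  have hfin := H x hxmem y hymem
  rw [hLHS] at hfin
  have : p ≤ η * t := le_trans hfin (by nlinarith [Metric.infDist_nonneg (x := y) (s := S x)])
  have : η * t ≤ p / 2 := by
    have := mul_le_mul_of_nonneg_left htp hη.le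
    calc η * t ≤ η * (p/(2*η)) := this
      _ = p / 2 := by field_simp
  linarith
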